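/- Let A be a von Neumann algebra with center Z(A) ∩ B = ℂ for a subalgebra B, and let {p_i}_{i∈I} be a family of nonzero projections in A summing to 1. Fix o ∈ I and define inductively I_0 := {o}, and I_{n+1} := { i ∈ I ∖ (I_0 ∪ ⋯ ∪ I_n) : p(n) A p_i ≠ {0} } where p(n) := Σ_{s≤n} Σ_{i∈I_s} p_i. Then I = ⋃_{n≥0} I_n (a disjoint union). -/
import Mathlib

set_option linter.unusedSectionVars false

local notation "⟪" x ", " y "⟫" => @inner ℂ _ _ x y

section Aux

variable {H : Type*} [NormedAddCommGroup H] [InnerProductSpace ℂ H] [CompleteSpace H]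
  {ι : Type*}

private theorem st7_pyth (v : ι → H) (hv : ∀ i j, i ≠ j → ⟪v i, v j⟫ = 0) (s : Finset ι) :
    ‖∑ i ∈ s, v i‖ ^ 2 = ∑ i ∈ s, ‖v i‖ ^ 2 := by
  have h : (⟪∑ i ∈ s, v i, ∑ i ∈ s, v i⟫ : ℂ) = ∑ i ∈ s, ⟪v i, v i⟫ := by
    rw [sum_inner]
    refine Finset.sum_congr rfl fun i hi => ?_
    rw [inner_sum]
    exact Finset.sum_eq_single_of_mem i hi fun j _ hji => hv i j (Ne.symm hji)
  simp only [inner_self_eq_norm_sq_to_K] at h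
  exact_mod_cast h

private theorem st7_summable (v : ι → H) (hv : ∀ i j, i ≠ j → ⟪v i, v j⟫ = 0)
    (hs : Summable fun i => ‖v i‖ ^ 2) : Summable v := by
  rw [summable_iff_vanishing_norm]
  intro ε hε
  obtain ⟨s, hsv⟩ := summable_iff_vanishing_norm.1 hs (ε ^ 2) (by positivity)
  refine ⟨s, fun t ht => ?_⟩
  have h1 : ‖∑ i ∈ t, v i‖ ^ 2 = ∑ i ∈ t, ‖v i‖ ^ 2 := st7_pyth v hv t
  have h2 := hsv t ht
  have h3 : ∑ i ∈ t, ‖v i‖ ^ 2 < ε ^ 2 :=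
    (le_abs_self _).trans_lt (by rwa [Real.norm_eq_abs] at h2)
  have h4 : ‖∑ i ∈ t, v i‖ ^ 2 < ε ^ 2 := h1 ▸ h3
  nlinarith [norm_nonneg (∑ i ∈ t, v i)]

end Aux



/-- The cumulative sets `cum n = I_0 ∪ ⋯ ∪ I_n` of the inductive construction:
`cum 0 = {o}` and `cum (n+1) = cum n ∪ {i | p(n) A p_i ≠ {0}}`, where the condition
`p(n) A p_i ≠ {0}` (with `p(n) = Σ_{j ∈ cum n} p_j`) is expressed equivalently as
`∃ j ∈ cum n, p_j A p_i ≠ {0}` (the `p_j` being mutually orthogonal projections). -/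
def statement7.cum {H : Type*} [NormedAddCommGroup H] [InnerProductSpace ℂ H]
    [CompleteSpace H] {ι : Type*} (Aset : Set (H →L[ℂ] H)) (p : ι → (H →L[ℂ] H))
    (o : ι) : ℕ → Set ι
  | 0 => {o}
  | n + 1 => statement7.cum Aset p o n ∪
      {i : ι | ∃ j ∈ statement7.cum Aset p o n, ∃ a ∈ Aset, p j * a * p i ≠ 0}

/-- Let `A` be a von Neumann algebra and `B` a von Neumann subalgebra
with `Z(A) ∩ B = ℂ`, and let `{p_i}_{i∈I}` be a family of nonzero mutually orthogonal
projections of `A` (lying in `B`) summing to `1`.  Fix `o ∈ I` and define inductively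
`I_0 = {o}` and `I_{n+1} = {i ∉ I_0 ∪ ⋯ ∪ I_n : p(n) A p_i ≠ {0}}` with
`p(n) = Σ_{s≤n} Σ_{i∈I_s} p_i`.  Then `I = ⋃_{n≥0} I_n`, i.e. every index belongs to
some cumulative set `cum n = I_0 ∪ ⋯ ∪ I_n`. -/
theorem statement7
    {H : Type*} [NormedAddCommGroup H] [InnerProductSpace ℂ H] [CompleteSpace H]
    (A B : VonNeumannAlgebra H)
    (hZ : ∀ x : H →L[ℂ] H, x ∈ B → x ∈ A → (∀ a ∈ (A : Set (H →L[ℂ] H)), x * a = a * x) →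
      ∃ c : ℂ, x = c • (1 : H →L[ℂ] H))
    {ι : Type*} (p : ι → (H →L[ℂ] H))
    (hmemA : ∀ i, p i ∈ A) (hmemB : ∀ i, p i ∈ B)
    (hproj : ∀ i, IsSelfAdjoint (p i) ∧ p i * p i = p i)
    (hnz : ∀ i, p i ≠ 0)
    (horth : ∀ i j, i ≠ j → p i * p j = 0)
    (hsum : ∀ x : H, HasSum (fun i => p i x) x)
    (o : ι) :
    ∀ i : ι, ∃ n : ℕ, i ∈ statement7.cum (A : Set (H →L[ℂ] H)) p o n := by
  intro i₀
  by_contra hi₀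
  push_neg at hi₀
  set S : Set ι := {i | ∃ n, i ∈ statement7.cum (A : Set (H →L[ℂ] H)) p o n} with hSdef
  have hoS : o ∈ S := ⟨0, rfl⟩
  have hi₀S : i₀ ∉ S := by rintro ⟨n, hn⟩; exact hi₀ n hn
  -- basic facts about the projections
  have hpSym : ∀ i (x y : H), ⟪p i x, y⟫ = ⟪x, p i y⟫ := fun i x y => (hproj i).1.isSymmetric x y
  have hIdem : ∀ i (x : H), p i (p i x) = p i x := by
    intro i x
    have := DFunLike.congr_fun (hproj i).2 x
    simpa [ContinuousLinearMap.mul_apply] using this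
  have horth' : ∀ i j, i ≠ j → ∀ x : H, p i (p j x) = 0 := by
    intro i j h x
    have := DFunLike.congr_fun (horth i j h) x
    simpa [ContinuousLinearMap.mul_apply] using this
  have horthInner : ∀ (x : H) i j, i ≠ j → ⟪p i x, p j x⟫ = 0 := by
    intro x i j h
    rw [hpSym i, horth' i j h, inner_zero_right]
  -- norm-square summability
  have hns : ∀ x : H, HasSum (fun i => ‖p i x‖ ^ 2) (‖x‖ ^ 2) := by
    intro x
    have h1 : HasSum (fun i => (innerSL ℂ x) (p i x)) ((innerSL ℂ x) x) := (hsum x).mapL _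
    have h2 : ∀ i, (innerSL ℂ x) (p i x) = ((‖p i x‖ : ℂ)) ^ 2 := by
      intro i
      calc (innerSL ℂ x) (p i x) = ⟪x, p i (p i x)⟫ := by rw [innerSL_apply_apply, hIdem]
      _ = ⟪p i x, p i x⟫ := (hpSym i x (p i x)).symm
      _ = _ := by rw [inner_self_eq_norm_sq_to_K]; norm_cast
    rw [funext h2] at h1
    have h3 : (innerSL ℂ x) x = ((‖x‖ : ℂ)) ^ 2 := by
      rw [innerSL_apply_apply, inner_self_eq_norm_sq_to_K]; norm_cast
    rw [h3] at h1
    have h4 := h1.mapL Complex.reCLM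
    simpa [← Complex.ofReal_pow] using h4
  -- the indicator family
  set f : H → ι → H := fun x => S.indicator (fun j => p j x) with hfdef
  have hf_mem : ∀ (x : H) {i}, i ∈ S → f x i = p i x := fun x {i} hi =>
    Set.indicator_of_mem hi _
  have hf_notMem : ∀ (x : H) {i}, i ∉ S → f x i = 0 := fun x {i} hi =>
    Set.indicator_of_notMem hi _
  have hforth : ∀ (x : H) i j, i ≠ j → ⟪f x i, f x j⟫ = 0 := by
    intro x i j hij
    by_cases hi : i ∈ S <;> by_cases hj : j ∈ S <;>
      simp [hf_mem, hf_notMem, hi, hj, horthInner x i j hij]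
  have hfsummable : ∀ x : H, Summable (f x) := by
    intro x
    refine st7_summable _ (hforth x) ?_
    refine Summable.of_nonneg_of_le (fun i => sq_nonneg _) ?_ (hns x).summable
    intro i
    by_cases hi : i ∈ S
    · rw [hf_mem x hi]
    · rw [hf_notMem x hi]; simpa using sq_nonneg _
  -- construct P
  have hPex : ∃ P : H →L[ℂ] H, ∀ x : H, HasSum (fun i => f x i) (P x) := by
    have hfadd : ∀ x y : H, f (x + y) = fun i => f x i + f y i := by
      intro x y; funext i
      by_cases hi : i ∈ S
      · simp [hf_mem _ hi, map_add]
      · simp [hf_notMem _ hi]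
    have hfsmul : ∀ (c : ℂ) (x : H), f (c • x) = fun i => c • f x i := by
      intro c x; funext i
      by_cases hi : i ∈ S
      · simp [hf_mem _ hi, map_smul]
      · simp [hf_notMem _ hi]
    have hbound : ∀ x : H, ‖∑' i, f x i‖ ≤ 1 * ‖x‖ := by
      intro x
      rw [one_mul]
      have hHS : HasSum (f x) (∑' i, f x i) := (hfsummable x).hasSum
      have hpart : ∀ F : Finset ι, ‖∑ i ∈ F, f x i‖ ≤ ‖x‖ := by
        intro F
        have e1 : ‖∑ i ∈ F, f x i‖ ^ 2 = ∑ i ∈ F, ‖f x i‖ ^ 2 := st7_pyth _ (hforth x) F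
        have e2 : ∑ i ∈ F, ‖f x i‖ ^ 2 ≤ ∑ i ∈ F, ‖p i x‖ ^ 2 := by
          refine Finset.sum_le_sum fun i _ => ?_
          by_cases hi : i ∈ S
          · rw [hf_mem x hi]
          · rw [hf_notMem x hi]; simpa using sq_nonneg _
        have e3 : ∑ i ∈ F, ‖p i x‖ ^ 2 ≤ ‖x‖ ^ 2 :=
          sum_le_hasSum F (fun i _ => sq_nonneg _) (hns x)
        have e4 : ‖∑ i ∈ F, f x i‖ ^ 2 ≤ ‖x‖ ^ 2 := by
          rw [e1]; exact e2.trans e3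
        exact le_of_pow_le_pow_left₀ two_ne_zero (norm_nonneg x) e4
      exact le_of_tendsto' (Filter.Tendsto.norm hHS) hpart
    refine ⟨LinearMap.mkContinuous
      { toFun := fun x => ∑' i, f x i
        map_add' := fun x y => by
          show (∑' i, f (x + y) i) = (∑' i, f x i) + ∑' i, f y i
          rw [hfadd x y]
          exact Summable.tsum_add (hfsummable x) (hfsummable y)
        map_smul' := fun c x => by
          show (∑' i, f (c • x) i) = c • ∑' i, f x i
          rw [hfsmul c x]
          exact Summable.tsum_const_smul c (hfsummable x) } 1 hbound, fun x => ?_⟩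
    exact (hfsummable x).hasSum
  obtain ⟨P, hP⟩ := hPex
  -- P fixes vectors killed by all p j, j ∉ S
  have hfix : ∀ y : H, (∀ j ∉ S, p j y = 0) → P y = y := by
    intro y hy
    have heq : ∀ i, f y i = p i y := by
      intro i
      by_cases hi : i ∈ S
      · exact hf_mem y hi
      · rw [hf_notMem y hi, hy i hi]
    have h1 := hP y
    rw [funext heq] at h1
    exact h1.unique (hsum y)
  -- action of P on ranges of the p j
  have hPp : ∀ (j : ι) (x : H), P (p j x) = S.indicator (fun _ => p j x) j := by
    intro j x
    classical
    have h2 : ∀ i, f (p j x) i = if i = j then S.indicator (fun _ => p j x) j else 0 := by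
      intro i
      by_cases hij : i = j
      · subst hij
        rw [if_pos rfl]
        by_cases hi : i ∈ S
        · rw [hf_mem _ hi, Set.indicator_of_mem hi, hIdem]
        · rw [hf_notMem _ hi, Set.indicator_of_notMem hi]
      · rw [if_neg hij]
        by_cases hi : i ∈ S
        · rw [hf_mem _ hi, horth' i j hij]
        · exact hf_notMem _ hi
    have h3 : HasSum (fun i => f (p j x) i)
        (S.indicator (fun _ => p j x) j) := by
      rw [funext h2]
      exact hasSum_ite_eq j _
    exact (hP (p j x)).unique h3
  have hPpo : ∀ x : H, P (p o x) = p o x := by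
    intro x; rw [hPp o x, Set.indicator_of_mem hoS]
  have hPpi₀ : ∀ x : H, P (p i₀ x) = 0 := by
    intro x; rw [hPp i₀ x, Set.indicator_of_notMem hi₀S]
  -- P lies in the double commutant of the p i
  have hcomm : ∀ y : H →L[ℂ] H, (∀ i, y * p i = p i * y) → y * P = P * y := by
    intro y hy
    ext x
    have h1 : HasSum (fun i => y (f x i)) (y (P x)) := (hP x).mapL y
    have h2 : ∀ i, y (f x i) = f (y x) i := by
      intro i
      by_cases hi : i ∈ S
      · rw [hf_mem _ hi, hf_mem _ hi]
        have := DFunLike.congr_fun (hy i) x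
        simpa [ContinuousLinearMap.mul_apply] using this
      · rw [hf_notMem _ hi, hf_notMem _ hi, map_zero]
    rw [funext h2] at h1
    have h3 := h1.unique (hP (y x))
    simpa [ContinuousLinearMap.mul_apply] using h3
  have hPA : P ∈ A := by
    rw [← SetLike.mem_coe, ← A.centralizer_centralizer]
    intro y hy
    exact hcomm y fun i => (hy (p i) (hmemA i)).symm
  have hPB : P ∈ B := by
    rw [← SetLike.mem_coe, ← B.centralizer_centralizer]
    intro y hy
    exact hcomm y fun i => (hy (p i) (hmemB i)).symm
  -- the crucial vanishing of cross terms
  have h3 : ∀ a ∈ (A : Set (H →L[ℂ] H)), ∀ i ∈ S, ∀ j ∉ S, p i * a * p j = 0 := by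
    intro a ha i hi j hj
    by_contra hne
    obtain ⟨n, hn⟩ := hi
    exact hj ⟨n + 1, Or.inr ⟨i, hn, a, ha, hne⟩⟩
  have h3' : ∀ a ∈ (A : Set (H →L[ℂ] H)), ∀ i ∈ S, ∀ j ∉ S, p j * a * p i = 0 := by
    intro a ha i hi j hj
    have h := h3 (star a) (star_mem ha) i hi j hj
    have h2 := congrArg star h
    simpa [star_mul, (hproj i).1.star_eq, (hproj j).1.star_eq, mul_assoc] using h2
  -- P commutes with A
  have hPcomm : ∀ a ∈ (A : Set (H →L[ℂ] H)), P * a = a * P := by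
    intro a ha
    have claimA : ∀ x : H, P (a (P x)) = a (P x) := by
      intro x
      apply hfix
      intro j hj
      have h1 : HasSum (fun i => (p j ∘L a) (f x i)) ((p j ∘L a) (P x)) := (hP x).mapL _
      have h2 : ∀ i, (p j ∘L a) (f x i) = 0 := by
        intro i
        by_cases hi : i ∈ S
        · rw [hf_mem _ hi, ContinuousLinearMap.comp_apply]
          have := DFunLike.congr_fun (h3' a ha i hi j hj) x
          simpa [ContinuousLinearMap.mul_apply] using this
        · rw [hf_notMem _ hi, map_zero]
      rw [funext h2] at h1
      have h4 := h1.unique hasSum_zero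
      simpa using h4
    have claimB : ∀ x : H, P (a x) = P (a (P x)) := by
      intro x
      have hminus : HasSum (fun j => p j x - f x j) (x - P x) := (hsum x).sub (hP x)
      have hkey : ∀ i ∈ S, p i (a x) = p i (a (P x)) := by
        intro i hi
        have h1 : HasSum (fun j => (p i ∘L a) (p j x - f x j)) ((p i ∘L a) (x - P x)) :=
          hminus.mapL _
        have h2 : ∀ j, (p i ∘L a) (p j x - f x j) = 0 := by
          intro j
          by_cases hj : j ∈ S
          · rw [hf_mem _ hj, sub_self, map_zero]
          · rw [hf_notMem _ hj, sub_zero, ContinuousLinearMap.comp_apply]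
            have := DFunLike.congr_fun (h3 a ha i hi j hj) x
            simpa [ContinuousLinearMap.mul_apply] using this
        rw [funext h2] at h1
        have h4 := h1.unique hasSum_zero
        have h5 : p i (a x) - p i (a (P x)) = 0 := by
          simpa [map_sub] using h4
        exact sub_eq_zero.mp h5
      have hfeq : ∀ i, f (a x) i = f (a (P x)) i := by
        intro i
        by_cases hi : i ∈ S
        · rw [hf_mem _ hi, hf_mem _ hi, hkey i hi]
        · rw [hf_notMem _ hi, hf_notMem _ hi]
      have hh := hP (a x)
      rw [funext hfeq] at hh
      exact hh.unique (hP (a (P x)))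
    ext x
    have h := claimB x
    rw [claimA x] at h
    simpa [ContinuousLinearMap.mul_apply] using h
  -- conclude via hZ
  obtain ⟨c, hc⟩ := hZ P hPB hPA hPcomm
  have hx₀ : ∃ x₀ : H, p o x₀ ≠ 0 := by
    by_contra hcon
    push_neg at hcon
    exact hnz o (ContinuousLinearMap.ext hcon)
  obtain ⟨x₀, hx₀⟩ := hx₀
  have hc1 : c • p o x₀ = p o x₀ := by
    have h := hPpo x₀
    rw [hc] at h
    simpa using h
  have hcval : c = 1 := by
    by_contra hcne
    have h : (c - 1) • p o x₀ = 0 := by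
      rw [sub_smul, one_smul, hc1, sub_self]
    rcases smul_eq_zero.mp h with h' | h'
    · exact hcne (by linear_combination h')
    · exact hx₀ h'
  have hfinal : p i₀ = 0 := by
    ext x
    have h := hPpi₀ x
    rw [hc, hcval] at h
    simpa using h
  exact hnz i₀ hfinal
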